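/- For all X, Y ∈ evC and every matrix composition a over M_d: ⟨SS(δ(X ⊠ Y)), a⟩ = Σ_{(b,c): diag(b,c)=a} ⟨SS(δX), b⟩ · ⟨SS(δY), c⟩, the sum ranging over all pairs of matrix compositions (b,c) with diag(b,c) = a. -/

import Mathlib

open scoped Classical

namespace TwoParam

/-! ### The free commutative monoid on `d` generators, written additively -/

abbrev Md (d : ℕ) := Fin d →₀ ℕ

/-! ### Raw matrices over `Md d` and matrix compositions

A raw matrix is a function `ℕ → ℕ → Md d` together with a number of rows and
columns, normalized to be `0` (= the neutral element `ε`) outside the range.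
The empty composition is the `0 × 0` matrix. -/

structure RawMat (d : ℕ) where
  rows : ℕ
  cols : ℕ
  entry : ℕ → ℕ → Md d
  entry_eq_zero : ∀ i j : ℕ, rows ≤ i ∨ cols ≤ j → entry i j = 0

namespace RawMat

variable {d : ℕ}

/-- A matrix composition: no row and no column consists entirely of `ε`.
(The empty `0 × 0` matrix vacuously satisfies this.) -/
def IsComp (a : RawMat d) : Prop :=
  (∀ i < a.rows, ∃ j < a.cols, a.entry i j ≠ 0) ∧
  (∀ j < a.cols, ∃ i < a.rows, a.entry i j ≠ 0)

/-- The empty composition. -/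
def empty (d : ℕ) : RawMat d := ⟨0, 0, fun _ _ => 0, fun _ _ _ => rfl⟩

/-- Diagonal block concatenation of two matrices. -/
def diag (a b : RawMat d) : RawMat d where
  rows := a.rows + b.rows
  cols := a.cols + b.cols
  entry := fun i j =>
    if i < a.rows ∧ j < a.cols then a.entry i j
    else if a.rows ≤ i ∧ a.cols ≤ j then b.entry (i - a.rows) (j - a.cols)
    else 0
  entry_eq_zero := by
    intro i j h
    try dsimp only
    split_ifs with h1 h2
    · exact absurd h (by omega)
    · exact b.entry_eq_zero _ _ (by omega)
    · rfl

/-- A non-empty composition is connected if it admits no nontrivial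
block-diagonal decomposition into compositions. -/
def Connected (a : RawMat d) : Prop :=
  a.IsComp ∧ a ≠ empty d ∧
    ∀ b c : RawMat d, b.IsComp → c.IsComp → a = b.diag c →
      b = empty d ∨ c = empty d

/-- Total weight of a matrix: the homomorphism `Md d → ℕ` sending every
generator to `1`, summed over all entries. -/
def weight (a : RawMat d) : ℕ :=
  ∑ i ∈ Finset.range a.rows, ∑ j ∈ Finset.range a.cols,
    (a.entry i j).sum fun _ e => e

end RawMat

/-! ### Evaluation of monomials -/

/-- For `z ∈ R^d` and `m ∈ Md d`, the evaluation `z^(m) = ∏ j, z j ^ m j`. -/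
def evalMon {d : ℕ} {R : Type*} [CommRing R] (z : Fin d → R) (m : Md d) : R :=
  m.prod fun j e => z j ^ e

/-! ### Two-parameter sums signature -/

/-- Strictly increasing chains of length `m` with values in `[lo, hi)`
(0-based indexing of the data). -/
noncomputable def chainsB (m lo hi : ℕ) : Finset (Fin m → ℕ) :=
  (Fintype.piFinset fun _ : Fin m => Finset.Ico lo hi).filter StrictMono

/-- The bounded two-parameter sums signature coefficient `⟨SS_{l;r}(Z), a⟩`. -/
noncomputable def SSb {d : ℕ} {R : Type*} [CommRing R]
    (Z : ℕ × ℕ → Fin d → R) (l r : ℕ × ℕ) (a : RawMat d) : R :=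
  ∑ ι ∈ chainsB a.rows l.1 r.1, ∑ κ ∈ chainsB a.cols l.2 r.2,
    ∏ s : Fin a.rows, ∏ t : Fin a.cols, evalMon (Z (ι s, κ t)) (a.entry s t)

/-- The (unbounded) two-parameter sums signature coefficient `⟨SS(Z), a⟩`,
for finitely supported `Z` a finite sum. -/
noncomputable def SSc {d : ℕ} {R : Type*} [CommRing R]
    (Z : ℕ × ℕ → Fin d → R) (a : RawMat d) : R :=
  ∑ᶠ ι ∈ {f : Fin a.rows → ℕ | StrictMono f},
    ∑ᶠ κ ∈ {g : Fin a.cols → ℕ | StrictMono g},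
      ∏ s : Fin a.rows, ∏ t : Fin a.cols, evalMon (Z (ι s, κ t)) (a.entry s t)

/-! ### Quasi-shuffle surjections -/

/-- `qShSet m s j`: surjections `{1,…,m+s} ↠ {1,…,j}` that are strictly
increasing on the first `m` and on the last `s` arguments. -/
noncomputable def qShSet (m s j : ℕ) : Finset (Fin (m + s) → Fin j) :=
  Finset.univ.filter fun q =>
    Function.Surjective q ∧
    (∀ u v : Fin (m + s), u < v → (v : ℕ) < m → q u < q v) ∧
    (∀ u v : Fin (m + s), u < v → m ≤ (u : ℕ) → q u < q v)

/-- The summand `c^{p,q}` of the two-parameter quasi-shuffle: the `j × k`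
matrix with entries `⋆_{u ∈ p⁻¹(x), v ∈ q⁻¹(y)} diag(a,b)_{u,v}`. -/
noncomputable def qshMat {d : ℕ} (a b : RawMat d) {j k : ℕ}
    (p : Fin (a.rows + b.rows) → Fin j) (q : Fin (a.cols + b.cols) → Fin k) :
    RawMat d where
  rows := j
  cols := k
  entry := fun x y =>
    if hx : x < j then
      if hy : y < k then
        ∑ u ∈ Finset.univ.filter (fun u => p u = ⟨x, hx⟩),
          ∑ v ∈ Finset.univ.filter (fun v => q v = ⟨y, hy⟩),
            (a.diag b).entry u v
      else 0
    else 0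
  entry_eq_zero := by
    intro x y h
    try dsimp only
    split_ifs with hx hy
    · exact absurd h (by omega)
    · rfl
    · rfl

/-- The two-parameter quasi-shuffle `a ⧢ b`, as an element of the free
`R`-module on matrices.  (The empty index sets for `j` or `k` outside
`[0, rows+rows]` resp. `[0, cols+cols]` implement the conventions
`e ⧢ a = a ⧢ e = a` and `e ⧢ e = e`.) -/
noncomputable def qsh {d : ℕ} (R : Type*) [CommRing R] (a b : RawMat d) :
    RawMat d →₀ R :=
  ∑ j ∈ Finset.range (a.rows + b.rows + 1),
    ∑ k ∈ Finset.range (a.cols + b.cols + 1),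
      ∑ p ∈ qShSet a.rows b.rows j,
        ∑ q ∈ qShSet a.cols b.cols k,
          Finsupp.single (qshMat a b p q) 1

/-- Bilinear extension of the quasi-shuffle to the free module. -/
noncomputable def qshL {d : ℕ} {R : Type*} [CommRing R]
    (F G : RawMat d →₀ R) : RawMat d →₀ R :=
  F.sum fun a ra => G.sum fun b rb => (ra * rb) • qsh R a b

/-! ### Two-parameter data: eventually zero / eventually constant functions -/

variable {V : Type*}

/-- Eventually zero two-parameter data: finite support. -/
def EvZ [Zero V] (X : ℕ × ℕ → V) : Prop := (Function.support X).Finite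

/-- Eventually constant two-parameter data: there is a box outside of which
`X` is constant; i.e. whenever two values differ, one of the two indices lies
in the box. -/
def EvC (X : ℕ × ℕ → V) : Prop :=
  ∃ n : ℕ × ℕ, ∀ i j : ℕ × ℕ, X i ≠ X j →
    (i.1 ≤ n.1 ∧ i.2 ≤ n.2) ∨ (j.1 ≤ n.1 ∧ j.2 ≤ n.2)

/-- The coordinate of `i` along the axis `a` (axis `0` = rows, `1` = cols). -/
def axC (a : Fin 2) (i : ℕ × ℕ) : ℕ := if a = 0 then i.1 else i.2

/-- Shift an index one step down along the axis `a`. -/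
def shiftD (a : Fin 2) (i : ℕ × ℕ) : ℕ × ℕ :=
  if a = 0 then (i.1 - 1, i.2) else (i.1, i.2 - 1)

/-- The zero insertion operator (0-based position `k`): insert a zero
row/column at position `k` along axis `a`. -/
def zeroIns [Zero V] (a : Fin 2) (k : ℕ) (X : ℕ × ℕ → V) : ℕ × ℕ → V :=
  fun i => if axC a i < k then X i else if axC a i = k then 0 else X (shiftD a i)

/-- The warping operator (0-based position `k`): duplicate the row/column at
position `k` along axis `a`. -/
def warp (a : Fin 2) (k : ℕ) (X : ℕ × ℕ → V) : ℕ × ℕ → V :=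
  fun i => if axC a i ≤ k then X i else X (shiftD a i)

/-- The two-parameter (forward) difference operator `δ`. -/
def diffOp [AddCommGroup V] (X : ℕ × ℕ → V) : ℕ × ℕ → V := fun i =>
  X (i.1 + 1, i.2 + 1) - X (i.1 + 1, i.2) - X (i.1, i.2 + 1) + X (i.1, i.2)

/-- The summation operator `ς`, a right inverse of `δ`:
`(ς Z)_{i,j} = Σ_{s ≥ i} Σ_{t ≥ j} Z_{s,t}`. -/
noncomputable def sigmaOp [AddCommMonoid V] (Z : ℕ × ℕ → V) : ℕ × ℕ → V :=
  fun i => ∑ᶠ p ∈ {p : ℕ × ℕ | i.1 ≤ p.1 ∧ i.2 ≤ p.2}, Z p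

/-- The set of all `n ∈ ℕ²` such that `X` is determined inside the
`n.1 × n.2` upper-left box (0-based size/count convention). -/
def sizeSetC (X : ℕ × ℕ → V) : Set (ℕ × ℕ) :=
  {n | ∀ i j : ℕ × ℕ, X i ≠ X j →
    (i.1 < n.1 ∧ i.2 < n.2) ∨ (j.1 < n.1 ∧ j.2 < n.2)}

/-- `rows(X)` for eventually constant `X`: first component of the least
element of `sizeSetC X`. -/
noncomputable def rowsC (X : ℕ × ℕ → V) : ℕ := sInf (Prod.fst '' sizeSetC X)

/-- `cols(X)` for eventually constant `X`. -/
noncomputable def colsC (X : ℕ × ℕ → V) : ℕ := sInf (Prod.snd '' sizeSetC X)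

/-- `rows(Z)` for eventually zero `Z`, defined via the support. -/
noncomputable def rowsZ [Zero V] (Z : ℕ × ℕ → V) : ℕ :=
  sInf {m : ℕ | ∀ i : ℕ × ℕ, Z i ≠ 0 → i.1 < m}

/-- `cols(Z)` for eventually zero `Z`, defined via the support. -/
noncomputable def colsZ [Zero V] (Z : ℕ × ℕ → V) : ℕ :=
  sInf {m : ℕ | ∀ i : ℕ × ℕ, Z i ≠ 0 → i.2 < m}

/-- Diagonal concatenation `A ⊘ B` on eventually zero functions,
with `rows`/`cols` taken in the eventually-constant sense. -/
noncomputable def dconc [AddCommGroup V] (A B : ℕ × ℕ → V) : ℕ × ℕ → V :=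
  A + (zeroIns 0 0)^[rowsC A] ((zeroIns 1 0)^[colsC A] B)

/-- Diagonal concatenation `A ⊘ B` on eventually zero functions,
with `rows`/`cols` taken in the support sense. -/
noncomputable def dconcZ [AddCommGroup V] (A B : ℕ × ℕ → V) : ℕ × ℕ → V :=
  A + (zeroIns 0 0)^[rowsZ A] ((zeroIns 1 0)^[colsZ A] B)

/-- Concatenation along the diagonal `X ⊠ Y` on eventually constant
functions: `ς(δX) + Warp_{1,1}^{rows X}(Warp_{2,1}^{cols X}(Y))`. -/
noncomputable def bconc [AddCommGroup V] (X Y : ℕ × ℕ → V) : ℕ × ℕ → V :=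
  sigmaOp (diffOp X) + (warp 0 0)^[rowsC X] ((warp 1 0)^[colsC X] Y)


/-! ### Two-parameter quasisymmetric functions -/

/-- Monomials in the commuting variables `x_{i,j}`, `(i,j) ∈ ℕ × ℕ`. -/
abbrev Mon := (ℕ × ℕ) →₀ ℕ

/-- Total degree of a monomial. -/
def mdeg (m : Mon) : ℕ := m.sum fun _ e => e

/-- A formal power series (given by its coefficient function) has finite
total degree. -/
def FinDeg {R : Type*} [Zero R] (f : Mon → R) : Prop :=
  ∃ D : ℕ, ∀ m : Mon, f m ≠ 0 → mdeg m ≤ D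

/-- `ℕ₀`-valued raw matrices, normalized to vanish outside the range. -/
structure NMat where
  rows : ℕ
  cols : ℕ
  entry : ℕ → ℕ → ℕ
  entry_eq_zero : ∀ i j : ℕ, rows ≤ i ∨ cols ≤ j → entry i j = 0

namespace NMat

/-- An `ℕ₀`-matrix composition: no zero row and no zero column. -/
def IsComp (a : NMat) : Prop :=
  (∀ i < a.rows, ∃ j < a.cols, a.entry i j ≠ 0) ∧
  (∀ j < a.cols, ∃ i < a.rows, a.entry i j ≠ 0)

/-- The empty composition. -/
def empty : NMat := ⟨0, 0, fun _ _ => 0, fun _ _ _ => rfl⟩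

/-- Diagonal block concatenation. -/
def diag (a b : NMat) : NMat where
  rows := a.rows + b.rows
  cols := a.cols + b.cols
  entry := fun i j =>
    if i < a.rows ∧ j < a.cols then a.entry i j
    else if a.rows ≤ i ∧ a.cols ≤ j then b.entry (i - a.rows) (j - a.cols)
    else 0
  entry_eq_zero := by
    intro i j h
    try dsimp only
    split_ifs with h1 h2
    · exact absurd h (by omega)
    · exact b.entry_eq_zero _ _ (by omega)
    · rfl

end NMat

/-- The monomial `∏_{s,t} x_{ι_s, κ_t}^{a_{s,t}}` attached to a matrix `a`
and chains `ι`, `κ`. -/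
noncomputable def monomialOf (a : NMat) (ι : Fin a.rows → ℕ) (κ : Fin a.cols → ℕ) : Mon :=
  ∑ s : Fin a.rows, ∑ t : Fin a.cols, Finsupp.single (ι s, κ t) (a.entry s t)

/-- The monomial quasisymmetric function `M_a` (as a coefficient function):
each monomial `∏ x_{ι_s,κ_t}^{a_{s,t}}` for strictly increasing chains occurs
with coefficient `1`.  In particular `M_e = 1`. -/
noncomputable def monQ {R : Type*} [CommRing R] (a : NMat) : Mon → R := fun m =>
  if ∃ (ι : Fin a.rows → ℕ) (κ : Fin a.cols → ℕ),
      StrictMono ι ∧ StrictMono κ ∧ m = monomialOf a ι κ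
  then 1 else 0

/-- Two-parameter quasisymmetric function: finite degree, and for every
matrix composition `a` and all strictly increasing chains `ι`, `κ`, the
coefficients of `∏ x_{ι_s,κ_t}^{a_{s,t}}` and of `∏ x_{s,t}^{a_{s,t}}`
coincide. -/
def IsQSym {R : Type*} [CommRing R] (f : Mon → R) : Prop :=
  FinDeg f ∧ ∀ a : NMat, a.IsComp →
    ∀ (ι : Fin a.rows → ℕ) (κ : Fin a.cols → ℕ), StrictMono ι → StrictMono κ →
      f (monomialOf a ι κ) =
        f (monomialOf a (fun s => (s : ℕ)) (fun t => (t : ℕ)))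

/-- Product of formal power series (Cauchy product of coefficient
functions). -/
noncomputable def mulF {R : Type*} [CommRing R] (f g : Mon → R) : Mon → R :=
  fun m => ∑ p ∈ Finset.HasAntidiagonal.antidiagonal m, f p.1 * g p.2

/-- Two-parameter quasisymmetric functions form an `R`-submodule of the
module of coefficient functions. -/
noncomputable def QSymSub (R : Type*) [CommRing R] : Submodule R (Mon → R) where
  carrier := {f | IsQSym f}
  add_mem' := by
    rintro f g ⟨⟨Df, hDf⟩, hf⟩ ⟨⟨Dg, hDg⟩, hg⟩
    refine ⟨⟨max Df Dg, ?_⟩, ?_⟩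
    · intro m hm
      by_contra hc
      push_neg at hc
      have h1 : f m = 0 := by
        by_contra h
        have := hDf m h
        omega
      have h2 : g m = 0 := by
        by_contra h
        have := hDg m h
        omega
      apply hm
      show f m + g m = 0
      rw [h1, h2, add_zero]
    · intro a ha ι κ hι hκ
      show f _ + g _ = f _ + g _
      rw [hf a ha ι κ hι hκ, hg a ha ι κ hι hκ]
  zero_mem' := ⟨⟨0, fun _ hm => absurd rfl hm⟩, fun _ _ _ _ _ _ => rfl⟩
  smul_mem' := by
    rintro c f ⟨⟨Df, hDf⟩, hf⟩
    refine ⟨⟨Df, ?_⟩, ?_⟩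
    · intro m hm
      apply hDf
      intro h
      apply hm
      show c • f m = 0
      rw [h, smul_zero]
    · intro a ha ι κ hι hκ
      show c • f _ = c • f _
      rw [hf a ha ι κ hι hκ]

/-- Index shift used by the free analogue of zero insertion: indices with
coordinate `≥ k` along axis `a` are shifted up by one (axis `0` = rows). -/
def liftIdx (a : Fin 2) (k : ℕ) (i : ℕ × ℕ) : ℕ × ℕ :=
  if a = 0 then (if i.1 < k then i else (i.1 + 1, i.2))
  else (if i.2 < k then i else (i.1, i.2 + 1))

/-- The free analogue of zero insertion on formal power series: the algebra
endomorphism sending `x_i ↦ x_i` for `i_a < k`, `x_i ↦ 0` for `i_a = k` and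
`x_i ↦ x_{i - e_a}` for `i_a > k` (0-based position `k`).  On coefficient
functions it is given by precomposition with the index lift. -/
noncomputable def zeroF {R : Type*} [CommRing R] (a : Fin 2) (k : ℕ)
    (f : Mon → R) : Mon → R :=
  fun m => f (m.mapDomain (liftIdx a k))

/-- The quasi-shuffle summand `c^{p,q}` for `ℕ₀`-matrices. -/
noncomputable def nQshMat (a b : NMat) {j k : ℕ}
    (p : Fin (a.rows + b.rows) → Fin j) (q : Fin (a.cols + b.cols) → Fin k) :
    NMat where
  rows := j
  cols := k
  entry := fun x y =>
    if hx : x < j then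
      if hy : y < k then
        ∑ u ∈ Finset.univ.filter (fun u => p u = ⟨x, hx⟩),
          ∑ v ∈ Finset.univ.filter (fun v => q v = ⟨y, hy⟩),
            (a.diag b).entry u v
      else 0
    else 0
  entry_eq_zero := by
    intro x y h
    try dsimp only
    split_ifs with hx hy
    · exact absurd h (by omega)
    · rfl
    · rfl

/-- One-dimensional two-parameter sums signature coefficient `⟨SS(Z), a⟩`. -/
noncomputable def SScN {K : Type*} [CommRing K] (Z : ℕ × ℕ → K) (a : NMat) : K :=
  ∑ᶠ ι ∈ {f : Fin a.rows → ℕ | StrictMono f},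
    ∑ᶠ κ ∈ {g : Fin a.cols → ℕ | StrictMono g},
      ∏ s : Fin a.rows, ∏ t : Fin a.cols, Z (ι s, κ t) ^ a.entry s t

/-- Evaluation of a formal power series at finitely supported data. -/
noncomputable def evalSeries {K : Type*} [CommRing K] (f : Mon → K)
    (Z : ℕ × ℕ → K) : K :=
  ∑ᶠ m : Mon, f m * m.prod fun i e => Z i ^ e

end TwoParam

section ChenAux

open Function

namespace TwoParam

variable {d : ℕ} {R : Type*} [CommRing R]

lemma evalMon_zero_right (z : Fin d → R) : evalMon z (0 : Md d) = 1 := by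
  simp [evalMon]

lemma evalMon_zero_left {m : Md d} (hm : m ≠ 0) : evalMon (0 : Fin d → R) m = 0 := by
  obtain ⟨j, hj⟩ : ∃ j, m j ≠ 0 := by
    by_contra h; push_neg at h; exact hm (Finsupp.ext h)
  refine Finset.prod_eq_zero (Finsupp.mem_support_iff.2 hj) ?_
  simp [zero_pow hj]

variable {V : Type*}

lemma sizeSetC_min {X : ℕ × ℕ → V} {u v : ℕ × ℕ}
    (hu : u ∈ sizeSetC X) (hv : v ∈ sizeSetC X) :
    (min u.1 v.1, min u.2 v.2) ∈ sizeSetC X := by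
  have houter : ∀ c : ℕ × ℕ, c ∈ sizeSetC X → ∀ p q : ℕ × ℕ,
      (c.1 ≤ p.1 ∨ c.2 ≤ p.2) → (c.1 ≤ q.1 ∨ c.2 ≤ q.2) → X p = X q := by
    intro c hc p q hp hq
    by_contra hne
    rcases hc p q hne with ⟨h1, h2⟩ | ⟨h1, h2⟩ <;> omega
  have key : ∀ p : ℕ × ℕ, (min u.1 v.1 ≤ p.1 ∨ min u.2 v.2 ≤ p.2) →
      X p = X (u.1 + v.1, u.2 + v.2) := by
    intro p hp
    have hpu : (u.1 ≤ p.1 ∨ u.2 ≤ p.2) ∨ (v.1 ≤ p.1 ∨ v.2 ≤ p.2) := by omega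
    rcases hpu with h | h
    · exact houter u hu p _ h (Or.inl (Nat.le_add_right u.1 v.1))
    · exact houter v hv p _ h (Or.inl (Nat.le_add_left v.1 u.1))
  intro i j hij
  by_contra hc
  push_neg at hc
  obtain ⟨hc1, hc2⟩ := hc
  have hi : X i = X (u.1 + v.1, u.2 + v.2) := key i (by omega)
  have hj : X j = X (u.1 + v.1, u.2 + v.2) := key j (by omega)
  exact hij (hi.trans hj.symm)

lemma sizeSetC_nonempty {X : ℕ × ℕ → V} (hX : EvC X) : (sizeSetC X).Nonempty := by
  obtain ⟨n, hn⟩ := hX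
  exact ⟨(n.1 + 1, n.2 + 1), fun i j hij => by
    rcases hn i j hij with ⟨h1, h2⟩ | ⟨h1, h2⟩
    · exact Or.inl ⟨by omega, by omega⟩
    · exact Or.inr ⟨by omega, by omega⟩⟩

lemma size_mem_sizeSetC {X : ℕ × ℕ → V} (hX : EvC X) :
    (rowsC X, colsC X) ∈ sizeSetC X := by
  have hne := sizeSetC_nonempty hX
  obtain ⟨u, hu, hu1⟩ : ∃ u ∈ sizeSetC X, u.1 = rowsC X := by
    have : rowsC X ∈ Prod.fst '' sizeSetC X := Nat.sInf_mem (hne.image _)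
    obtain ⟨u, hu, h⟩ := this; exact ⟨u, hu, h⟩
  obtain ⟨v, hv, hv2⟩ : ∃ v ∈ sizeSetC X, v.2 = colsC X := by
    have : colsC X ∈ Prod.snd '' sizeSetC X := Nat.sInf_mem (hne.image _)
    obtain ⟨v, hv, h⟩ := this; exact ⟨v, hv, h⟩
  have hmin := sizeSetC_min hu hv
  have h1 : min u.1 v.1 = rowsC X := by
    have : rowsC X ≤ v.1 := Nat.sInf_le ⟨v, hv, rfl⟩
    omega
  have h2 : min u.2 v.2 = colsC X := by
    have : colsC X ≤ u.2 := Nat.sInf_le ⟨u, hu, rfl⟩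
    omega
  rwa [h1, h2] at hmin

lemma eq_outside_box {X : ℕ × ℕ → V} (hX : EvC X) {p q : ℕ × ℕ}
    (hp : rowsC X ≤ p.1 ∨ colsC X ≤ p.2) (hq : rowsC X ≤ q.1 ∨ colsC X ≤ q.2) :
    X p = X q := by
  by_contra hne
  rcases size_mem_sizeSetC hX p q hne with ⟨h1, h2⟩ | ⟨h1, h2⟩ <;> omega

lemma diffOp_eq_zero_outside [AddCommGroup V] {X : ℕ × ℕ → V} (hX : EvC X)
    {i : ℕ × ℕ} (hi : rowsC X ≤ i.1 ∨ colsC X ≤ i.2) : diffOp X i = 0 := by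
  have h12 : X (i.1 + 1, i.2 + 1) = X (i.1, i.2) :=
    eq_outside_box hX (by omega) (by omega)
  have h1 : X (i.1 + 1, i.2) = X (i.1, i.2) :=
    eq_outside_box hX (by omega) (by omega)
  have h2 : X (i.1, i.2 + 1) = X (i.1, i.2) :=
    eq_outside_box hX (by omega) (by omega)
  simp only [diffOp, h12, h1, h2]
  abel

lemma warp0_apply [Zero V] (W : ℕ × ℕ → V) (j : ℕ × ℕ) :
    warp (0 : Fin 2) 0 W j = if j.1 ≤ 0 then W j else W (j.1 - 1, j.2) := by
  simp [warp, axC, shiftD]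

lemma warp1_apply [Zero V] (W : ℕ × ℕ → V) (j : ℕ × ℕ) :
    warp (1 : Fin 2) 0 W j = if j.2 ≤ 0 then W j else W (j.1, j.2 - 1) := by
  have h10 : (1 : Fin 2) ≠ 0 := by decide
  simp [warp, axC, shiftD, h10]

lemma warp_iter [Zero V] (Y : ℕ × ℕ → V) (m n : ℕ) (i : ℕ × ℕ) :
    ((warp 0 0)^[m] ((warp 1 0)^[n] Y)) i = Y (i.1 - m, i.2 - n) := by
  have h1 : ∀ (W : ℕ × ℕ → V) (k : ℕ) (j : ℕ × ℕ),
      ((warp (0 : Fin 2) 0)^[k] W) j = W (j.1 - k, j.2) := by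
    intro W k
    induction k with
    | zero => intro j; simp
    | succ k ih =>
      intro j
      rw [Function.iterate_succ_apply', warp0_apply]
      split_ifs with h
      · rw [ih]
        have e : j.1 - k = j.1 - (k + 1) := by omega
        rw [e]
      · rw [ih]
        show W (j.1 - 1 - k, j.2) = W (j.1 - (k + 1), j.2)
        have e : j.1 - 1 - k = j.1 - (k + 1) := by omega
        rw [e]
  have h2 : ∀ (k : ℕ) (j : ℕ × ℕ),
      ((warp (1 : Fin 2) 0)^[k] Y) j = Y (j.1, j.2 - k) := by
    intro k
    induction k with
    | zero => intro j; simp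
    | succ k ih =>
      intro j
      rw [Function.iterate_succ_apply', warp1_apply]
      split_ifs with h
      · rw [ih]
        have e : j.2 - k = j.2 - (k + 1) := by omega
        rw [e]
      · rw [ih]
        show Y (j.1, j.2 - 1 - k) = Y (j.1, j.2 - (k + 1))
        have e : j.2 - 1 - k = j.2 - (k + 1) := by omega
        rw [e]
  rw [h1, h2]

lemma diffOp_trunc [AddCommGroup V] (Y : ℕ × ℕ → V) (m n : ℕ) (i : ℕ × ℕ) :
    diffOp (fun j => Y (j.1 - m, j.2 - n)) i =
      if m ≤ i.1 ∧ n ≤ i.2 then diffOp Y (i.1 - m, i.2 - n) else 0 := by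
  simp only [diffOp]
  split_ifs with h
  · have e1 : (i.1 + 1 - m, i.2 + 1 - n) = ((i.1 - m) + 1, (i.2 - n) + 1) := by
      simp only [Prod.mk.injEq, and_true, true_and]; omega
    have e2 : (i.1 + 1 - m, i.2 - n) = ((i.1 - m) + 1, i.2 - n) := by
      simp only [Prod.mk.injEq, and_true, true_and]; omega
    have e3 : (i.1 - m, i.2 + 1 - n) = (i.1 - m, (i.2 - n) + 1) := by
      simp only [Prod.mk.injEq, and_true, true_and]; omega
    rw [e1, e2, e3]
  · rcases not_and_or.mp h with h' | h'
    · have e1 : i.1 + 1 - m = i.1 - m ∨ i.2 + 1 - n = i.2 - n := Or.inl (by omega)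
      have ha : i.1 + 1 - m = i.1 - m := by omega
      rw [ha]; abel
    · have hb : i.2 + 1 - n = i.2 - n := by omega
      rw [hb]; abel

lemma sigmaOp_eq_sum [AddCommMonoid V] {Z : ℕ × ℕ → V}
    (hZ : (Function.support Z).Finite) (i1 i2 : ℕ) :
    sigmaOp Z (i1, i2) = ∑ p ∈ hZ.toFinset, if i1 ≤ p.1 ∧ i2 ≤ p.2 then Z p else 0 := by
  rw [sigmaOp]
  rw [finsum_mem_eq_sum_of_inter_support_eq Z
    (t := hZ.toFinset.filter (fun p => i1 ≤ p.1 ∧ i2 ≤ p.2))]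
  · rw [Finset.sum_filter]
  · ext p
    simp only [Set.mem_inter_iff, Set.mem_setOf_eq, Finset.coe_filter,
      Set.Finite.mem_toFinset, Function.mem_support, Finset.mem_coe, Finset.mem_filter]
    tauto

lemma diffOp_sigmaOp [AddCommGroup V] {Z : ℕ × ℕ → V}
    (hZ : (Function.support Z).Finite) : diffOp (sigmaOp Z) = Z := by
  funext i
  obtain ⟨i1, i2⟩ := i
  show sigmaOp Z (i1 + 1, i2 + 1) - sigmaOp Z (i1 + 1, i2) - sigmaOp Z (i1, i2 + 1)
      + sigmaOp Z (i1, i2) = Z (i1, i2)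
  rw [sigmaOp_eq_sum hZ, sigmaOp_eq_sum hZ, sigmaOp_eq_sum hZ, sigmaOp_eq_sum hZ]
  rw [← Finset.sum_sub_distrib, ← Finset.sum_sub_distrib, ← Finset.sum_add_distrib]
  have key : ∀ p ∈ hZ.toFinset,
      ((if i1 + 1 ≤ p.1 ∧ i2 + 1 ≤ p.2 then Z p else 0)
        - (if i1 + 1 ≤ p.1 ∧ i2 ≤ p.2 then Z p else 0)
        - (if i1 ≤ p.1 ∧ i2 + 1 ≤ p.2 then Z p else 0)
        + (if i1 ≤ p.1 ∧ i2 ≤ p.2 then Z p else 0))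
      = if p = (i1, i2) then Z p else 0 := by
    intro p _
    by_cases hp : p = (i1, i2)
    · subst hp
      show (if i1 + 1 ≤ i1 ∧ i2 + 1 ≤ i2 then Z (i1, i2) else 0)
          - (if i1 + 1 ≤ i1 ∧ i2 ≤ i2 then Z (i1, i2) else 0)
          - (if i1 ≤ i1 ∧ i2 + 1 ≤ i2 then Z (i1, i2) else 0)
          + (if i1 ≤ i1 ∧ i2 ≤ i2 then Z (i1, i2) else 0)
          = if (i1, i2) = (i1, i2) then Z (i1, i2) else 0
      rw [if_neg (by omega), if_neg (by omega), if_neg (by omega),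
        if_pos (by omega : i1 ≤ i1 ∧ i2 ≤ i2), if_pos rfl]
      abel
    · rw [if_neg hp]
      obtain ⟨p1, p2⟩ := p
      have hp' : ¬(p1 = i1 ∧ p2 = i2) := by
        intro ⟨e1, e2⟩; exact hp (by rw [e1, e2])
      show (if i1 + 1 ≤ p1 ∧ i2 + 1 ≤ p2 then Z (p1, p2) else 0)
          - (if i1 + 1 ≤ p1 ∧ i2 ≤ p2 then Z (p1, p2) else 0)
          - (if i1 ≤ p1 ∧ i2 + 1 ≤ p2 then Z (p1, p2) else 0)
          + (if i1 ≤ p1 ∧ i2 ≤ p2 then Z (p1, p2) else 0) = 0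
      split_ifs <;> first | (exfalso; omega) | abel
  rw [Finset.sum_congr rfl key, Finset.sum_ite_eq' hZ.toFinset (i1, i2) Z]
  split_ifs with hmem
  · rfl
  · symm
    by_contra hne
    exact hmem (hZ.mem_toFinset.2 hne)

lemma support_diffOp_finite [AddCommGroup V] {X : ℕ × ℕ → V} (hX : EvC X) :
    (Function.support (diffOp X)).Finite := by
  apply Set.Finite.subset ((Set.finite_Iio (rowsC X)).prod (Set.finite_Iio (colsC X)))
  intro p hp
  simp only [Set.mem_prod, Set.mem_Iio]
  by_contra hc
  exact hp (diffOp_eq_zero_outside hX (by omega))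

lemma diffOp_bconc [AddCommGroup V] {X Y : ℕ × ℕ → V} (hX : EvC X) :
    diffOp (bconc X Y) = fun i => diffOp X i +
      (if rowsC X ≤ i.1 ∧ colsC X ≤ i.2
        then diffOp Y (i.1 - rowsC X, i.2 - colsC X) else 0) := by
  funext i
  have hadd : diffOp (bconc X Y) i = diffOp (sigmaOp (diffOp X)) i
      + diffOp ((warp 0 0)^[rowsC X] ((warp 1 0)^[colsC X] Y)) i := by
    simp only [bconc, diffOp, Pi.add_apply]
    abel
  have hw : ((warp (0 : Fin 2) 0)^[rowsC X] ((warp (1 : Fin 2) 0)^[colsC X] Y))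
      = fun j => Y (j.1 - rowsC X, j.2 - colsC X) := funext (warp_iter Y _ _)
  rw [hadd, diffOp_sigmaOp (support_diffOp_finite hX), hw, diffOp_trunc]

/-! ### Chains -/

lemma mem_chainsB {m lo hi : ℕ} {f : Fin m → ℕ} :
    f ∈ chainsB m lo hi ↔ (∀ s, lo ≤ f s ∧ f s < hi) ∧ StrictMono f := by
  simp [chainsB, Fintype.mem_piFinset, Finset.mem_Ico]

/-- Glue two chains. -/
def glue {T : ℕ} (r : ℕ) (f : Fin r → ℕ) (g : Fin (T - r) → ℕ) : Fin T → ℕ :=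
  fun s => if h : (s : ℕ) < r then f ⟨s, h⟩
    else g ⟨(s : ℕ) - r, by have := s.2; omega⟩

lemma glue_apply_lt {T r : ℕ} (f : Fin r → ℕ) (g : Fin (T - r) → ℕ) (s : Fin T)
    (h : (s : ℕ) < r) : glue r f g s = f ⟨s, h⟩ := dif_pos h

lemma glue_apply_ge {T r : ℕ} (f : Fin r → ℕ) (g : Fin (T - r) → ℕ) (s : Fin T)
    (h : ¬ (s : ℕ) < r) :
    glue r f g s = g ⟨(s : ℕ) - r, by have := s.2; omega⟩ := dif_neg h

/-- Number of entries below `m`. -/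
noncomputable def cnt {T : ℕ} (m : ℕ) (f : Fin T → ℕ) : ℕ :=
  (Finset.univ.filter fun s => f s < m).card

lemma cnt_le {T m : ℕ} {f : Fin T → ℕ} : cnt m f ≤ T :=
  le_trans (Finset.card_filter_le _ _) (by simp)

lemma lt_cnt_iff {T m : ℕ} {f : Fin T → ℕ} (hf : StrictMono f) (s : Fin T) :
    (s : ℕ) < cnt m f ↔ f s < m := by
  constructor
  · intro h
    by_contra hc
    push_neg at hc
    have hsub : (Finset.univ.filter fun s' => f s' < m) ⊆
        Finset.univ.filter fun s' : Fin T => (s' : ℕ) < (s : ℕ) := by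
      intro x hx
      simp only [Finset.mem_filter, Finset.mem_univ, true_and] at hx ⊢
      by_contra hxs
      push_neg at hxs
      have hle : f s ≤ f x := hf.monotone hxs
      omega
    have hcard := Finset.card_le_card hsub
    have h2 : (Finset.univ.filter fun s' : Fin T => (s' : ℕ) < (s : ℕ)).card ≤ (s : ℕ) := by
      refine le_trans (Finset.card_le_card_of_injOn (fun x => (x : ℕ)) ?_ ?_
        (t := Finset.range (s : ℕ))) (by simp)
      · intro x hx
        simp only [Finset.coe_filter, Finset.coe_univ, Set.mem_univ, Set.mem_setOf_eq,
          Finset.mem_filter, Finset.mem_univ, true_and] at hx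
        exact Finset.mem_range.2 hx
      · intro x _ y _ hxy
        exact Fin.ext hxy
    unfold cnt at h
    omega
  · intro h
    have hsub : Finset.range ((s : ℕ) + 1) ⊆
        Finset.image (fun x : Fin T => (x : ℕ))
          (Finset.univ.filter fun s' => f s' < m) := by
      intro k hk
      rw [Finset.mem_range] at hk
      have hkT : k < T := by have := s.2; omega
      rw [Finset.mem_image]
      refine ⟨⟨k, hkT⟩, ?_, rfl⟩
      simp only [Finset.mem_filter, Finset.mem_univ, true_and]
      have hmono : f ⟨k, hkT⟩ ≤ f s := hf.monotone (by
        rw [Fin.le_def]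
        show k ≤ (s : ℕ)
        omega)
      exact lt_of_le_of_lt hmono h
    have hcard := Finset.card_le_card hsub
    rw [Finset.card_range] at hcard
    have himg : (Finset.image (fun x : Fin T => (x : ℕ))
        (Finset.univ.filter fun s' => f s' < m)).card
        ≤ (Finset.univ.filter fun s' : Fin T => f s' < m).card :=
      Finset.card_image_le
    unfold cnt
    omega

lemma card_filter_val_lt {T r : ℕ} (hr : r ≤ T) :
    (Finset.univ.filter fun s : Fin T => (s : ℕ) < r).card = r := by
  have hcard : (Finset.univ.filter fun s : Fin T => (s : ℕ) < r).card
      = (Finset.range r).card := by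
    refine Finset.card_bij (fun (s : Fin T) _ => (s : ℕ)) ?_ ?_ ?_
    · intro a ha
      simp only [Finset.mem_filter, Finset.mem_univ, true_and] at ha
      exact Finset.mem_range.2 ha
    · intro a _ b _ hab
      exact Fin.ext hab
    · intro b hb
      rw [Finset.mem_range] at hb
      refine ⟨⟨b, by omega⟩, ?_, rfl⟩
      simp only [Finset.mem_filter, Finset.mem_univ, true_and]
      exact hb
  rw [hcard, Finset.card_range]

lemma glue_mem {T r m M : ℕ} (hm : m ≤ M) (hr : r ≤ T) {f : Fin r → ℕ}
    {g : Fin (T - r) → ℕ} (hf : f ∈ chainsB r 0 m) (hg : g ∈ chainsB (T - r) m M) :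
    glue r f g ∈ chainsB T 0 M := by
  rw [mem_chainsB] at hf hg ⊢
  obtain ⟨hfb, hfm⟩ := hf
  obtain ⟨hgb, hgm⟩ := hg
  constructor
  · intro s
    unfold glue
    split_ifs with h
    · have := hfb ⟨s, h⟩; omega
    · have := hgb ⟨(s : ℕ) - r, by have := s.2; omega⟩; omega
  · intro s t hst
    have hst' : (s : ℕ) < (t : ℕ) := hst
    unfold glue
    split_ifs with h1 h2 h2
    · exact hfm (show (⟨s, h1⟩ : Fin r) < ⟨t, h2⟩ from Fin.mk_lt_mk.2 hst')
    · have h3 := (hfb ⟨s, h1⟩).2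
      have h4 := (hgb ⟨(t : ℕ) - r, by have := t.2; omega⟩).1
      omega
    · omega
    · exact hgm (Fin.mk_lt_mk.2 (by omega))

lemma glue_cnt {T r m M : ℕ} (hr : r ≤ T) {f : Fin r → ℕ} {g : Fin (T - r) → ℕ}
    (hf : f ∈ chainsB r 0 m) (hg : g ∈ chainsB (T - r) m M) :
    cnt m (glue r f g) = r := by
  rw [mem_chainsB] at hf hg
  have hset : (Finset.univ.filter fun s : Fin T => glue r f g s < m)
      = Finset.univ.filter fun s : Fin T => (s : ℕ) < r := by
    ext s
    simp only [Finset.mem_filter, Finset.mem_univ, true_and]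
    unfold glue
    split_ifs with h
    · have := (hf.1 ⟨s, h⟩).2
      constructor <;> intro <;> omega
    · have := (hg.1 ⟨(s : ℕ) - r, by have := s.2; omega⟩).1
      constructor <;> intro <;> omega
  unfold cnt
  rw [hset, card_filter_val_lt hr]

lemma sum_chainsB_split {R' : Type*} [AddCommMonoid R'] {T m M : ℕ} (hm : m ≤ M)
    (F : (Fin T → ℕ) → R') :
    ∑ f ∈ chainsB T 0 M, F f
      = ∑ r ∈ Finset.range (T + 1), ∑ f ∈ chainsB r 0 m,
          ∑ g ∈ chainsB (T - r) m M, F (glue r f g) := by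
  have hnest : ∀ r : ℕ, (∑ f ∈ chainsB r 0 m, ∑ g ∈ chainsB (T - r) m M, F (glue r f g))
      = ∑ p ∈ (chainsB r 0 m) ×ˢ (chainsB (T - r) m M), F (glue r p.1 p.2) := by
    intro r
    rw [Finset.sum_product]
  simp_rw [hnest]
  rw [Finset.sum_sigma' (Finset.range (T + 1))
    (fun r => (chainsB r 0 m) ×ˢ (chainsB (T - r) m M))
    (fun r p => F (glue r p.1 p.2))]
  symm
  refine Finset.sum_bij' (fun (x : Σ r : ℕ, (Fin r → ℕ) × (Fin (T - r) → ℕ)) _ =>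
      glue x.1 x.2.1 x.2.2)
    (fun f _ => (⟨cnt m f, (fun s => f ⟨s, lt_of_lt_of_le s.2 cnt_le⟩,
      fun s => f ⟨(s : ℕ) + cnt m f, by have := s.2; omega⟩)⟩ :
        Σ r : ℕ, (Fin r → ℕ) × (Fin (T - r) → ℕ))) ?_ ?_ ?_ ?_ ?_
  · rintro ⟨r, f, g⟩ hx
    simp only [Finset.mem_sigma, Finset.mem_range, Finset.mem_product] at hx
    have hx1 : r < T + 1 := hx.1
    show glue r f g ∈ chainsB T 0 M
    exact glue_mem hm (by omega) hx.2.1 hx.2.2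
  · intro f hfmem
    have hf := mem_chainsB.1 hfmem
    simp only [Finset.mem_sigma, Finset.mem_range, Finset.mem_product]
    refine ⟨by have := cnt_le (m := m) (f := f); omega, ?_, ?_⟩
    · rw [mem_chainsB]
      constructor
      · intro s
        have hlt : ((⟨(s : ℕ), lt_of_lt_of_le s.2 cnt_le⟩ : Fin T) : ℕ) < cnt m f := s.2
        rw [lt_cnt_iff hf.2] at hlt
        exact ⟨Nat.zero_le _, hlt⟩
      · intro s t hst
        have hst' : (s : ℕ) < (t : ℕ) := hst
        exact hf.2 (Fin.mk_lt_mk.2 hst')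
    · rw [mem_chainsB]
      constructor
      · intro s
        have h1 := (hf.1 ⟨(s : ℕ) + cnt m f, by have := s.2; omega⟩).2
        have h2 : ¬ (((⟨(s : ℕ) + cnt m f, by have := s.2; omega⟩ : Fin T) : ℕ)
            < cnt m f) := by simp
        rw [lt_cnt_iff hf.2] at h2
        push_neg at h2
        exact ⟨h2, h1⟩
      · intro s t hst
        have hst' : (s : ℕ) < (t : ℕ) := hst
        exact hf.2 (Fin.mk_lt_mk.2 (by omega))
  · rintro ⟨r, f, g⟩ hx
    simp only [Finset.mem_sigma, Finset.mem_range, Finset.mem_product] at hx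
    have hx1 : r < T + 1 := hx.1
    have hr : r ≤ T := by omega
    have hc : cnt m (glue r f g) = r := glue_cnt hr hx.2.1 hx.2.2
    refine Sigma.ext hc ?_
    have hgoal : ∀ (r' : ℕ) (h' : r' = r)
        (A : Fin r' → ℕ) (B : Fin (T - r') → ℕ),
        (∀ k (hk : k < r') (hk' : k < r), A ⟨k, hk⟩ = f ⟨k, hk'⟩) →
        (∀ k (hk : k < T - r') (hk' : k < T - r), B ⟨k, hk⟩ = g ⟨k, hk'⟩) →
        HEq (A, B) (f, g) := by
      rintro r' rfl A B hA hB
      apply heq_of_eq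
      refine Prod.ext (funext fun s => ?_) (funext fun s => ?_)
      · exact hA _ s.2 s.2
      · exact hB _ s.2 s.2
    refine hgoal _ hc _ _ ?_ ?_
    · intro k hk hk'
      exact (glue_apply_lt f g _ hk').trans (congrArg f (Fin.ext rfl))
    · intro k hk hk'
      refine (glue_apply_ge f g ⟨k + cnt m (glue r f g), by omega⟩
        (by show ¬ (k + cnt m (glue r f g) < r); omega)).trans
        (congrArg g (Fin.ext ?_))
      show k + cnt m (glue r f g) - r = k
      omega
  · intro f hfmem
    funext s
    by_cases h : (s : ℕ) < cnt m f
    · exact (glue_apply_lt _ _ s h).trans (congrArg f (Fin.ext rfl))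
    · refine (glue_apply_ge _ _ s h).trans (congrArg f (Fin.ext ?_))
      show (s : ℕ) - cnt m f + cnt m f = (s : ℕ)
      omega
  · rintro ⟨r, f, g⟩ _
    rfl

lemma sum_chainsB_shift {R' : Type*} [AddCommMonoid R'] {k lo hi : ℕ}
    (G : (Fin k → ℕ) → R') :
    (∑ f ∈ chainsB k lo hi, G (fun s => f s - lo))
      = ∑ f ∈ chainsB k 0 (hi - lo), G f := by
  refine Finset.sum_bij' (fun f _ => fun s => f s - lo)
    (fun f _ => fun s => f s + lo) ?_ ?_ ?_ ?_ ?_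
  · intro f hf
    rw [mem_chainsB] at hf ⊢
    refine ⟨fun s => ⟨Nat.zero_le _, ?_⟩, ?_⟩
    · show f s - lo < hi - lo
      have := (hf.1 s); omega
    · intro s t hst
      show f s - lo < f t - lo
      have h1 := (hf.1 s).1
      have h2 := hf.2 hst
      omega
  · intro f hf
    rw [mem_chainsB] at hf ⊢
    refine ⟨fun s => ⟨Nat.le_add_left lo (f s), ?_⟩, ?_⟩
    · show f s + lo < hi
      have := (hf.1 s).2; omega
    · intro s t hst
      show f s + lo < f t + lo
      have := hf.2 hst
      omega
  · intro f hf
    rw [mem_chainsB] at hf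
    funext s
    show f s - lo + lo = f s
    have := (hf.1 s).1
    omega
  · intro f _
    funext s
    show f s + lo - lo = f s
    omega
  · intro f _
    rfl

/-! ### Blocks of a raw matrix -/

/-- The mixed blocks (top-right, bottom-left) w.r.t. the cut `(r, c)` vanish. -/
def Splits (r c : ℕ) (a : RawMat d) : Prop :=
  ∀ s t : ℕ, s < a.rows → t < a.cols →
    ((s < r ∧ c ≤ t) ∨ (r ≤ s ∧ t < c)) → a.entry s t = 0

/-- Top-left block. -/
@[reducible] def blockL (r c : ℕ) (a : RawMat d) : RawMat d :=
  ⟨r, c, fun i j => if i < r ∧ j < c then a.entry i j else 0,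
   fun i j h => if_neg (by omega)⟩

/-- Bottom-right block. -/
@[reducible] def blockR (r c : ℕ) (a : RawMat d) : RawMat d :=
  ⟨a.rows - r, a.cols - c,
   fun i j => if i < a.rows - r ∧ j < a.cols - c then a.entry (i + r) (j + c) else 0,
   fun i j h => if_neg (by omega)⟩

lemma rawMat_ext {a b : RawMat d} (h1 : a.rows = b.rows) (h2 : a.cols = b.cols)
    (h3 : ∀ i j, a.entry i j = b.entry i j) : a = b := by
  obtain ⟨r1, c1, e1, p1⟩ := a
  obtain ⟨r2, c2, e2, p2⟩ := b
  dsimp only at h1 h2 h3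
  subst h1
  subst h2
  have he : e1 = e2 := funext fun i => funext fun j => h3 i j
  subst he
  rfl

lemma diag_blocks_eq {a : RawMat d} {r c : ℕ} (hr : r ≤ a.rows) (hc : c ≤ a.cols)
    (hs : Splits r c a) : (blockL r c a).diag (blockR r c a) = a := by
  apply rawMat_ext
  · show r + (a.rows - r) = a.rows; omega
  · show c + (a.cols - c) = a.cols; omega
  · intro i j
    show (if i < r ∧ j < c then (if i < r ∧ j < c then a.entry i j else 0)
      else if r ≤ i ∧ c ≤ j then
        (if i - r < a.rows - r ∧ j - c < a.cols - c
          then a.entry (i - r + r) (j - c + c) else 0)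
      else 0) = a.entry i j
    by_cases h1 : i < r ∧ j < c
    · rw [if_pos h1, if_pos h1]
    · rw [if_neg h1]
      by_cases h2 : r ≤ i ∧ c ≤ j
      · rw [if_pos h2]
        by_cases h3 : i < a.rows ∧ j < a.cols
        · rw [if_pos (by omega)]
          have e1 : i - r + r = i := by omega
          have e2 : j - c + c = j := by omega
          rw [e1, e2]
        · rw [if_neg (by omega)]
          exact (a.entry_eq_zero i j (by omega)).symm
      · by_cases h3 : i < a.rows ∧ j < a.cols
        · rw [if_neg h2]
          exact (hs i j h3.1 h3.2 (by omega)).symm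
        · rw [if_neg h2]
          exact (a.entry_eq_zero i j (by omega)).symm

lemma blockL_isComp {a : RawMat d} {r c : ℕ} (ha : a.IsComp) (hr : r ≤ a.rows)
    (hc : c ≤ a.cols) (hs : Splits r c a) : (blockL r c a).IsComp := by
  constructor
  · intro i hi
    have hi' : i < r := hi
    obtain ⟨j, hj, hne⟩ := ha.1 i (by omega)
    have hjc : j < c := by
      by_contra hjc
      exact hne (hs i j (by omega) hj (Or.inl ⟨by omega, by omega⟩))
    refine ⟨j, hjc, ?_⟩
    show (if i < r ∧ j < c then a.entry i j else 0) ≠ 0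
    rw [if_pos ⟨hi', hjc⟩]
    exact hne
  · intro j hj
    have hj' : j < c := hj
    obtain ⟨i, hi, hne⟩ := ha.2 j (by omega)
    have hic : i < r := by
      by_contra hic
      exact hne (hs i j hi (by omega) (Or.inr ⟨by omega, by omega⟩))
    refine ⟨i, hic, ?_⟩
    show (if i < r ∧ j < c then a.entry i j else 0) ≠ 0
    rw [if_pos ⟨hic, hj'⟩]
    exact hne

lemma blockR_isComp {a : RawMat d} {r c : ℕ} (ha : a.IsComp) (hr : r ≤ a.rows)
    (hc : c ≤ a.cols) (hs : Splits r c a) : (blockR r c a).IsComp := by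
  constructor
  · intro i hi
    have hi' : i < a.rows - r := hi
    obtain ⟨j, hj, hne⟩ := ha.1 (i + r) (by omega)
    have hjc : c ≤ j := by
      by_contra hjc
      exact hne (hs (i + r) j (by omega) hj (Or.inr ⟨by omega, by omega⟩))
    refine ⟨j - c, by show j - c < a.cols - c; omega, ?_⟩
    show (if i < a.rows - r ∧ j - c < a.cols - c
      then a.entry (i + r) (j - c + c) else 0) ≠ 0
    rw [if_pos (by omega)]
    have e : j - c + c = j := by omega
    rw [e]
    exact hne
  · intro j hj
    have hj' : j < a.cols - c := hj
    obtain ⟨i, hi, hne⟩ := ha.2 (j + c) (by omega)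
    have hic : r ≤ i := by
      by_contra hic
      exact hne (hs i (j + c) hi (by omega) (Or.inl ⟨by omega, by omega⟩))
    refine ⟨i - r, by show i - r < a.rows - r; omega, ?_⟩
    show (if i - r < a.rows - r ∧ j < a.cols - c
      then a.entry (i - r + r) (j + c) else 0) ≠ 0
    rw [if_pos (by omega)]
    have e : i - r + r = i := by omega
    rw [e]
    exact hne

lemma blockL_of_diag (b c : RawMat d) : blockL b.rows b.cols (b.diag c) = b := by
  apply rawMat_ext
  · rfl
  · rfl
  · intro i j
    show (if i < b.rows ∧ j < b.cols then
      (if i < b.rows ∧ j < b.cols then b.entry i j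
        else if b.rows ≤ i ∧ b.cols ≤ j then c.entry (i - b.rows) (j - b.cols) else 0)
      else 0) = b.entry i j
    by_cases h : i < b.rows ∧ j < b.cols
    · rw [if_pos h, if_pos h]
    · rw [if_neg h]
      exact (b.entry_eq_zero i j (by omega)).symm

lemma blockR_of_diag (b c : RawMat d) : blockR b.rows b.cols (b.diag c) = c := by
  apply rawMat_ext
  · show b.rows + c.rows - b.rows = c.rows; omega
  · show b.cols + c.cols - b.cols = c.cols; omega
  · intro i j
    show (if i < b.rows + c.rows - b.rows ∧ j < b.cols + c.cols - b.cols then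
      (if i + b.rows < b.rows ∧ j + b.cols < b.cols then b.entry (i + b.rows) (j + b.cols)
        else if b.rows ≤ i + b.rows ∧ b.cols ≤ j + b.cols
          then c.entry (i + b.rows - b.rows) (j + b.cols - b.cols) else 0)
      else 0) = c.entry i j
    by_cases h : i < c.rows ∧ j < c.cols
    · rw [if_pos (by omega), if_neg (by omega), if_pos (by omega)]
      have e1 : i + b.rows - b.rows = i := by omega
      have e2 : j + b.cols - b.cols = j := by omega
      rw [e1, e2]
    · rw [if_neg (by omega)]
      exact (c.entry_eq_zero i j (by omega)).symm

lemma splits_of_diag (b c : RawMat d) : Splits b.rows b.cols (b.diag c) := by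
  intro s t hsr htc hmix
  show (if s < b.rows ∧ t < b.cols then b.entry s t
    else if b.rows ≤ s ∧ b.cols ≤ t then c.entry (s - b.rows) (t - b.cols) else 0) = 0
  rcases hmix with ⟨h1, h2⟩ | ⟨h1, h2⟩
  · rw [if_neg (by omega), if_neg (by omega)]
  · rw [if_neg (by omega), if_neg (by omega)]

/-! ### Bounding the signature sums -/

lemma SSc_eq_sum_chainsB {Z : ℕ × ℕ → Fin d → R} {a : RawMat d} (ha : a.IsComp)
    {M N : ℕ} (hZ : ∀ i : ℕ × ℕ, M ≤ i.1 ∨ N ≤ i.2 → Z i = 0) :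
    SSc Z a = ∑ ι ∈ chainsB a.rows 0 M, ∑ κ ∈ chainsB a.cols 0 N,
      ∏ s : Fin a.rows, ∏ t : Fin a.cols, evalMon (Z (ι s, κ t)) (a.entry s t) := by
  have hbound : ∀ (ι : Fin a.rows → ℕ) (κ : Fin a.cols → ℕ),
      (∏ s : Fin a.rows, ∏ t : Fin a.cols, evalMon (Z (ι s, κ t)) (a.entry s t)) ≠ 0 →
      (∀ s, ι s < M) ∧ (∀ t, κ t < N) := by
    intro ι κ hne
    constructor
    · intro s
      by_contra hs
      push_neg at hs
      obtain ⟨j, hj, hjne⟩ := ha.1 s s.2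
      apply hne
      refine Finset.prod_eq_zero (Finset.mem_univ s) ?_
      refine Finset.prod_eq_zero (Finset.mem_univ (⟨j, hj⟩ : Fin a.cols)) ?_
      rw [hZ (ι s, κ ⟨j, hj⟩) (Or.inl hs)]
      exact evalMon_zero_left hjne
    · intro t
      by_contra ht
      push_neg at ht
      obtain ⟨i, hi, hine⟩ := ha.2 t t.2
      apply hne
      refine Finset.prod_eq_zero (Finset.mem_univ (⟨i, hi⟩ : Fin a.rows)) ?_
      refine Finset.prod_eq_zero (Finset.mem_univ t) ?_
      rw [hZ (ι ⟨i, hi⟩, κ t) (Or.inr ht)]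
      exact evalMon_zero_left hine
  have inner_eq : ∀ ι : Fin a.rows → ℕ,
      (∑ᶠ κ ∈ {g : Fin a.cols → ℕ | StrictMono g},
        ∏ s : Fin a.rows, ∏ t : Fin a.cols, evalMon (Z (ι s, κ t)) (a.entry s t))
      = ∑ κ ∈ chainsB a.cols 0 N,
        ∏ s : Fin a.rows, ∏ t : Fin a.cols, evalMon (Z (ι s, κ t)) (a.entry s t) := by
    intro ι
    apply finsum_mem_eq_sum_of_inter_support_eq
    ext κ
    simp only [Set.mem_inter_iff, Set.mem_setOf_eq, Function.mem_support, Finset.coe_sort_coe,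
      Finset.mem_coe]
    constructor
    · rintro ⟨hmono, hne⟩
      exact ⟨mem_chainsB.2 ⟨fun t => ⟨Nat.zero_le _, (hbound ι κ hne).2 t⟩, hmono⟩, hne⟩
    · rintro ⟨hmem, hne⟩
      exact ⟨(mem_chainsB.1 hmem).2, hne⟩
  rw [SSc, finsum_mem_congr rfl (fun ι _ => inner_eq ι)]
  apply finsum_mem_eq_sum_of_inter_support_eq
  ext ι
  simp only [Set.mem_inter_iff, Set.mem_setOf_eq, Function.mem_support, Finset.coe_sort_coe,
    Finset.mem_coe]
  constructor
  · rintro ⟨hmono, hne⟩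
    obtain ⟨κ, _, hprod⟩ := Finset.exists_ne_zero_of_sum_ne_zero hne
    exact ⟨mem_chainsB.2 ⟨fun s => ⟨Nat.zero_le _, (hbound ι κ hprod).1 s⟩, hmono⟩, hne⟩
  · rintro ⟨hmem, hne⟩
    exact ⟨(mem_chainsB.1 hmem).2, hne⟩

/-! ### Product splitting -/

def emb1 {A r : ℕ} (hr : r ≤ A) (s : Fin r) : Fin A := ⟨s, lt_of_lt_of_le s.2 hr⟩

def emb2 {A r : ℕ} (hr : r ≤ A) (s : Fin (A - r)) : Fin A :=
  ⟨(s : ℕ) + r, by have := s.2; omega⟩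

lemma prod_fin_split {M' : Type*} [CommMonoid M'] {A r : ℕ} (hr : r ≤ A) (f : Fin A → M') :
    (∏ s : Fin A, f s)
      = (∏ s : Fin r, f (emb1 hr s)) * ∏ s : Fin (A - r), f (emb2 hr s) := by
  have h : r + (A - r) = A := by omega
  rw [← Equiv.prod_comp (finCongr h) f]
  rw [Fin.prod_univ_add (f := fun i : Fin (r + (A - r)) => f (finCongr h i))]
  congr 1 <;>
    refine Finset.prod_congr rfl fun s _ => congrArg f (Fin.ext ?_) <;>
    · simp [emb1, emb2]
      omega

lemma prod_split4 {M' : Type*} [CommMonoid M'] {A B r c : ℕ} (hr : r ≤ A) (hc : c ≤ B)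
    (e : Fin A → Fin B → M') :
    (∏ s : Fin A, ∏ t : Fin B, e s t)
    = (((∏ s : Fin r, ∏ t : Fin c, e (emb1 hr s) (emb1 hc t)) *
        ∏ s : Fin r, ∏ t : Fin (B - c), e (emb1 hr s) (emb2 hc t)) *
       ((∏ s : Fin (A - r), ∏ t : Fin c, e (emb2 hr s) (emb1 hc t)) *
        ∏ s : Fin (A - r), ∏ t : Fin (B - c), e (emb2 hr s) (emb2 hc t))) := by
  rw [prod_fin_split hr (fun s => ∏ t : Fin B, e s t)]
  congr 1
  · rw [← Finset.prod_mul_distrib]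
    exact Finset.prod_congr rfl fun s _ => prod_fin_split hc (fun t => e (emb1 hr s) t)
  · rw [← Finset.prod_mul_distrib]
    exact Finset.prod_congr rfl fun s _ => prod_fin_split hc (fun t => e (emb2 hr s) t)

lemma four_sum_factor {R' : Type*} [CommRing R'] {α β γ δ' : Type*}
    (s1 : Finset α) (s2 : Finset β) (s3 : Finset γ) (s4 : Finset δ')
    (f : α → γ → R') (g : β → δ' → R') :
    (∑ x ∈ s1, ∑ y ∈ s2, ∑ z ∈ s3, ∑ w ∈ s4, f x z * g y w)
      = (∑ x ∈ s1, ∑ z ∈ s3, f x z) * ∑ y ∈ s2, ∑ w ∈ s4, g y w := by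
  have h1 : ∀ x, (∑ y ∈ s2, ∑ z ∈ s3, ∑ w ∈ s4, f x z * g y w)
      = (∑ z ∈ s3, f x z) * ∑ y ∈ s2, ∑ w ∈ s4, g y w := by
    intro x
    rw [Finset.mul_sum]
    apply Finset.sum_congr rfl
    intro y _
    rw [Finset.sum_mul]
    apply Finset.sum_congr rfl
    intro z _
    rw [Finset.mul_sum]
  rw [Finset.sum_congr rfl fun x _ => h1 x, Finset.sum_mul]

end TwoParam

end ChenAux


open TwoParam in
/-- Chen's identity for eventually constant functions and
concatenation along the diagonal. -/
theorem statement15 {d : ℕ} {R : Type*} [CommRing R] [IsDomain R]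
    (X Y : ℕ × ℕ → Fin d → R) (hX : EvC X) (hY : EvC Y)
    (a : RawMat d) (ha : a.IsComp) :
    SSc (diffOp (bconc X Y)) a =
      ∑ᶠ bc ∈ {bc : RawMat d × RawMat d |
          bc.1.IsComp ∧ bc.2.IsComp ∧ bc.1.diag bc.2 = a},
        SSc (diffOp X) bc.1 * SSc (diffOp Y) bc.2 := by
  classical
  have hZdef : ∀ i : ℕ × ℕ, diffOp (bconc X Y) i = diffOp X i +
      (if rowsC X ≤ i.1 ∧ colsC X ≤ i.2
        then diffOp Y (i.1 - rowsC X, i.2 - colsC X) else 0) :=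
    fun i => congrFun (diffOp_bconc hX) i
  have hZbound : ∀ i : ℕ × ℕ,
      rowsC X + rowsC Y ≤ i.1 ∨ colsC X + colsC Y ≤ i.2 →
      diffOp (bconc X Y) i = 0 := by
    intro i hi
    rw [hZdef i]
    split_ifs with h
    · rw [diffOp_eq_zero_outside hX (by omega),
        diffOp_eq_zero_outside hY (i := (i.1 - rowsC X, i.2 - colsC X))
          (by show rowsC Y ≤ i.1 - rowsC X ∨ colsC Y ≤ i.2 - colsC X; omega)]
      simp
    · rw [diffOp_eq_zero_outside hX (by omega)]
      simp
  have hZbox : ∀ x y : ℕ, x < rowsC X → y < colsC X →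
      diffOp (bconc X Y) (x, y) = diffOp X (x, y) := by
    intro x y h1 h2
    rw [hZdef (x, y), if_neg (by show ¬(rowsC X ≤ x ∧ colsC X ≤ y); omega), add_zero]
  have hZquad : ∀ x y : ℕ, rowsC X ≤ x → colsC X ≤ y →
      diffOp (bconc X Y) (x, y) = diffOp Y (x - rowsC X, y - colsC X) := by
    intro x y h1 h2
    rw [hZdef (x, y), if_pos (show rowsC X ≤ x ∧ colsC X ≤ y from ⟨h1, h2⟩),
      diffOp_eq_zero_outside hX (Or.inl h1), zero_add]
  have hZmix1 : ∀ x y : ℕ, x < rowsC X → colsC X ≤ y →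
      diffOp (bconc X Y) (x, y) = 0 := by
    intro x y h1 h2
    rw [hZdef (x, y), if_neg (by show ¬(rowsC X ≤ x ∧ colsC X ≤ y); omega),
      diffOp_eq_zero_outside hX (Or.inr h2), add_zero]
  have hZmix2 : ∀ x y : ℕ, rowsC X ≤ x → y < colsC X →
      diffOp (bconc X Y) (x, y) = 0 := by
    intro x y h1 h2
    rw [hZdef (x, y), if_neg (by show ¬(rowsC X ≤ x ∧ colsC X ≤ y); omega),
      diffOp_eq_zero_outside hX (Or.inl h1), add_zero]
  -- the factorization of the product over a glued pair of chains
  have hfact : ∀ (r c : ℕ), r ≤ a.rows → c ≤ a.cols → Splits r c a →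
      ∀ (ι₁ : Fin r → ℕ) (ι₂ : Fin (a.rows - r) → ℕ)
        (κ₁ : Fin c → ℕ) (κ₂ : Fin (a.cols - c) → ℕ),
      ι₁ ∈ chainsB r 0 (rowsC X) →
      ι₂ ∈ chainsB (a.rows - r) (rowsC X) (rowsC X + rowsC Y) →
      κ₁ ∈ chainsB c 0 (colsC X) →
      κ₂ ∈ chainsB (a.cols - c) (colsC X) (colsC X + colsC Y) →
      (∏ s : Fin a.rows, ∏ t : Fin a.cols,
        evalMon (diffOp (bconc X Y) (glue r ι₁ ι₂ s, glue c κ₁ κ₂ t)) (a.entry s t))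
      = (∏ s : Fin r, ∏ t : Fin c,
          evalMon (diffOp X (ι₁ s, κ₁ t)) ((blockL r c a).entry s t))
        * ∏ s : Fin (a.rows - r), ∏ t : Fin (a.cols - c),
            evalMon (diffOp Y (ι₂ s - rowsC X, κ₂ t - colsC X))
              ((blockR r c a).entry s t) := by
    intro r c hr hc hsp ι₁ ι₂ κ₁ κ₂ hι₁ hι₂ hκ₁ hκ₂
    rw [prod_split4 hr hc]
    beta_reduce
    have h1 : (∏ s : Fin r, ∏ t : Fin c,
        evalMon (diffOp (bconc X Y)
          (glue r ι₁ ι₂ (emb1 hr s), glue c κ₁ κ₂ (emb1 hc t)))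
          (a.entry ↑(emb1 hr s) ↑(emb1 hc t)))
        = ∏ s : Fin r, ∏ t : Fin c,
            evalMon (diffOp X (ι₁ s, κ₁ t)) ((blockL r c a).entry s t) := by
      refine Finset.prod_congr rfl fun s _ => Finset.prod_congr rfl fun t _ => ?_
      have hg1 : glue r ι₁ ι₂ (emb1 hr s) = ι₁ s :=
        (glue_apply_lt ι₁ ι₂ (emb1 hr s) s.2).trans (congrArg ι₁ (Fin.ext rfl))
      have hg2 : glue c κ₁ κ₂ (emb1 hc t) = κ₁ t :=
        (glue_apply_lt κ₁ κ₂ (emb1 hc t) t.2).trans (congrArg κ₁ (Fin.ext rfl))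
      rw [hg1, hg2, hZbox (ι₁ s) (κ₁ t) ((mem_chainsB.1 hι₁).1 s).2
        ((mem_chainsB.1 hκ₁).1 t).2]
      rw [show ((blockL r c a).entry ↑s ↑t) = a.entry ↑s ↑t from
        if_pos ⟨s.2, t.2⟩]
      rfl
    have h2 : (∏ s : Fin r, ∏ t : Fin (a.cols - c),
        evalMon (diffOp (bconc X Y)
          (glue r ι₁ ι₂ (emb1 hr s), glue c κ₁ κ₂ (emb2 hc t)))
          (a.entry ↑(emb1 hr s) ↑(emb2 hc t))) = 1 := by
      refine Finset.prod_eq_one fun s _ => Finset.prod_eq_one fun t _ => ?_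
      by_cases hz : a.entry ↑(emb1 hr s) ↑(emb2 hc t) = 0
      · rw [hz, evalMon_zero_right]
      · exfalso
        exact hz (hsp (↑s) ((t : ℕ) + c) (by have := s.2; omega)
          (by have := t.2; omega) (Or.inl ⟨s.2, by omega⟩))
    have h3 : (∏ s : Fin (a.rows - r), ∏ t : Fin c,
        evalMon (diffOp (bconc X Y)
          (glue r ι₁ ι₂ (emb2 hr s), glue c κ₁ κ₂ (emb1 hc t)))
          (a.entry ↑(emb2 hr s) ↑(emb1 hc t))) = 1 := by
      refine Finset.prod_eq_one fun s _ => Finset.prod_eq_one fun t _ => ?_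
      by_cases hz : a.entry ↑(emb2 hr s) ↑(emb1 hc t) = 0
      · rw [hz, evalMon_zero_right]
      · exfalso
        exact hz (hsp ((s : ℕ) + r) (↑t) (by have := s.2; omega)
          (by have := t.2; omega) (Or.inr ⟨by omega, t.2⟩))
    have h4 : (∏ s : Fin (a.rows - r), ∏ t : Fin (a.cols - c),
        evalMon (diffOp (bconc X Y)
          (glue r ι₁ ι₂ (emb2 hr s), glue c κ₁ κ₂ (emb2 hc t)))
          (a.entry ↑(emb2 hr s) ↑(emb2 hc t)))
        = ∏ s : Fin (a.rows - r), ∏ t : Fin (a.cols - c),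
            evalMon (diffOp Y (ι₂ s - rowsC X, κ₂ t - colsC X))
              ((blockR r c a).entry s t) := by
      refine Finset.prod_congr rfl fun s _ => Finset.prod_congr rfl fun t _ => ?_
      have hg1 : glue r ι₁ ι₂ (emb2 hr s) = ι₂ s :=
        (glue_apply_ge ι₁ ι₂ (emb2 hr s) (by show ¬((s : ℕ) + r < r); omega)).trans
          (congrArg ι₂ (Fin.ext (by show (s : ℕ) + r - r = ↑s; omega)))
      have hg2 : glue c κ₁ κ₂ (emb2 hc t) = κ₂ t :=
        (glue_apply_ge κ₁ κ₂ (emb2 hc t) (by show ¬((t : ℕ) + c < c); omega)).trans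
          (congrArg κ₂ (Fin.ext (by show (t : ℕ) + c - c = ↑t; omega)))
      rw [hg1, hg2, hZquad (ι₂ s) (κ₂ t) ((mem_chainsB.1 hι₂).1 s).1
        ((mem_chainsB.1 hκ₂).1 t).1]
      rw [show ((blockR r c a).entry ↑s ↑t) = a.entry ((s : ℕ) + r) ((t : ℕ) + c) from
        if_pos ⟨s.2, t.2⟩]
      rfl
    rw [h1, h2, h3, h4, mul_one, one_mul]
  -- the cell computation
  have hcell : ∀ r ∈ Finset.range (a.rows + 1), ∀ c ∈ Finset.range (a.cols + 1),
      (∑ ι₁ ∈ chainsB r 0 (rowsC X),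
        ∑ ι₂ ∈ chainsB (a.rows - r) (rowsC X) (rowsC X + rowsC Y),
          ∑ κ₁ ∈ chainsB c 0 (colsC X),
            ∑ κ₂ ∈ chainsB (a.cols - c) (colsC X) (colsC X + colsC Y),
              ∏ s : Fin a.rows, ∏ t : Fin a.cols,
                evalMon (diffOp (bconc X Y) (glue r ι₁ ι₂ s, glue c κ₁ κ₂ t))
                  (a.entry s t))
      = if Splits r c a
          then SSc (diffOp X) (blockL r c a) * SSc (diffOp Y) (blockR r c a)
          else 0 := by
    intro r hrm c hcm
    have hr : r ≤ a.rows := by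
      have := Finset.mem_range.1 hrm; omega
    have hc : c ≤ a.cols := by
      have := Finset.mem_range.1 hcm; omega
    by_cases hsp : Splits r c a
    · rw [if_pos hsp]
      have hXpart : SSc (diffOp X) (blockL r c a)
          = ∑ ι₁ ∈ chainsB r 0 (rowsC X), ∑ κ₁ ∈ chainsB c 0 (colsC X),
              ∏ s : Fin r, ∏ t : Fin c,
                evalMon (diffOp X (ι₁ s, κ₁ t)) ((blockL r c a).entry s t) := by
        rw [SSc_eq_sum_chainsB (blockL_isComp ha hr hc hsp)
          (fun i hi => diffOp_eq_zero_outside hX hi)]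
      have hYpart : SSc (diffOp Y) (blockR r c a)
          = ∑ ι₂ ∈ chainsB (a.rows - r) (rowsC X) (rowsC X + rowsC Y),
              ∑ κ₂ ∈ chainsB (a.cols - c) (colsC X) (colsC X + colsC Y),
                ∏ s : Fin (a.rows - r), ∏ t : Fin (a.cols - c),
                  evalMon (diffOp Y (ι₂ s - rowsC X, κ₂ t - colsC X))
                    ((blockR r c a).entry s t) := by
        rw [SSc_eq_sum_chainsB (blockR_isComp ha hr hc hsp)
          (fun i hi => diffOp_eq_zero_outside hY hi)]
        symm
        calc (∑ ι₂ ∈ chainsB (a.rows - r) (rowsC X) (rowsC X + rowsC Y),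
              ∑ κ₂ ∈ chainsB (a.cols - c) (colsC X) (colsC X + colsC Y),
                ∏ s : Fin (a.rows - r), ∏ t : Fin (a.cols - c),
                  evalMon (diffOp Y (ι₂ s - rowsC X, κ₂ t - colsC X))
                    ((blockR r c a).entry s t))
            = ∑ ι ∈ chainsB (a.rows - r) 0 (rowsC X + rowsC Y - rowsC X),
                ∑ κ₂ ∈ chainsB (a.cols - c) (colsC X) (colsC X + colsC Y),
                  ∏ s : Fin (a.rows - r), ∏ t : Fin (a.cols - c),
                    evalMon (diffOp Y (ι s, κ₂ t - colsC X))
                      ((blockR r c a).entry s t) :=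
              sum_chainsB_shift (G := fun ι =>
                ∑ κ₂ ∈ chainsB (a.cols - c) (colsC X) (colsC X + colsC Y),
                  ∏ s : Fin (a.rows - r), ∏ t : Fin (a.cols - c),
                    evalMon (diffOp Y (ι s, κ₂ t - colsC X))
                      ((blockR r c a).entry s t))
          _ = ∑ ι ∈ chainsB (a.rows - r) 0 (rowsC X + rowsC Y - rowsC X),
                ∑ κ ∈ chainsB (a.cols - c) 0 (colsC X + colsC Y - colsC X),
                  ∏ s : Fin (a.rows - r), ∏ t : Fin (a.cols - c),
                    evalMon (diffOp Y (ι s, κ t))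
                      ((blockR r c a).entry s t) :=
              Finset.sum_congr rfl fun ι _ =>
                sum_chainsB_shift (G := fun κ =>
                  ∏ s : Fin (a.rows - r), ∏ t : Fin (a.cols - c),
                    evalMon (diffOp Y (ι s, κ t)) ((blockR r c a).entry s t))
          _ = ∑ ι ∈ chainsB (a.rows - r) 0 (rowsC Y),
                ∑ κ ∈ chainsB (a.cols - c) 0 (colsC Y),
                  ∏ s : Fin (a.rows - r), ∏ t : Fin (a.cols - c),
                    evalMon (diffOp Y (ι s, κ t))
                      ((blockR r c a).entry s t) := by
              simp only [show rowsC X + rowsC Y - rowsC X = rowsC Y from by omega,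
                show colsC X + colsC Y - colsC X = colsC Y from by omega]
      calc (∑ ι₁ ∈ chainsB r 0 (rowsC X),
            ∑ ι₂ ∈ chainsB (a.rows - r) (rowsC X) (rowsC X + rowsC Y),
              ∑ κ₁ ∈ chainsB c 0 (colsC X),
                ∑ κ₂ ∈ chainsB (a.cols - c) (colsC X) (colsC X + colsC Y),
                  ∏ s : Fin a.rows, ∏ t : Fin a.cols,
                    evalMon (diffOp (bconc X Y) (glue r ι₁ ι₂ s, glue c κ₁ κ₂ t))
                      (a.entry s t))
          = ∑ ι₁ ∈ chainsB r 0 (rowsC X),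
              ∑ ι₂ ∈ chainsB (a.rows - r) (rowsC X) (rowsC X + rowsC Y),
                ∑ κ₁ ∈ chainsB c 0 (colsC X),
                  ∑ κ₂ ∈ chainsB (a.cols - c) (colsC X) (colsC X + colsC Y),
                    (∏ s : Fin r, ∏ t : Fin c,
                      evalMon (diffOp X (ι₁ s, κ₁ t)) ((blockL r c a).entry s t))
                    * ∏ s : Fin (a.rows - r), ∏ t : Fin (a.cols - c),
                        evalMon (diffOp Y (ι₂ s - rowsC X, κ₂ t - colsC X))
                          ((blockR r c a).entry s t) := by
            refine Finset.sum_congr rfl fun ι₁ hι₁ => Finset.sum_congr rfl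
              fun ι₂ hι₂ => Finset.sum_congr rfl fun κ₁ hκ₁ =>
                Finset.sum_congr rfl fun κ₂ hκ₂ => ?_
            exact hfact r c hr hc hsp ι₁ ι₂ κ₁ κ₂ hι₁ hι₂ hκ₁ hκ₂
        _ = (∑ ι₁ ∈ chainsB r 0 (rowsC X), ∑ κ₁ ∈ chainsB c 0 (colsC X),
              ∏ s : Fin r, ∏ t : Fin c,
                evalMon (diffOp X (ι₁ s, κ₁ t)) ((blockL r c a).entry s t))
            * ∑ ι₂ ∈ chainsB (a.rows - r) (rowsC X) (rowsC X + rowsC Y),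
                ∑ κ₂ ∈ chainsB (a.cols - c) (colsC X) (colsC X + colsC Y),
                  ∏ s : Fin (a.rows - r), ∏ t : Fin (a.cols - c),
                    evalMon (diffOp Y (ι₂ s - rowsC X, κ₂ t - colsC X))
                      ((blockR r c a).entry s t) :=
            four_sum_factor _ _ _ _ _ _
        _ = SSc (diffOp X) (blockL r c a) * SSc (diffOp Y) (blockR r c a) := by
            rw [hXpart, hYpart]
    · rw [if_neg hsp]
      unfold Splits at hsp
      push_neg at hsp
      obtain ⟨s0, t0, hs0, ht0, hmix, hne⟩ := hsp
      refine Finset.sum_eq_zero fun ι₁ hι₁ => Finset.sum_eq_zero fun ι₂ hι₂ =>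
        Finset.sum_eq_zero fun κ₁ hκ₁ => Finset.sum_eq_zero fun κ₂ hκ₂ => ?_
      refine Finset.prod_eq_zero (Finset.mem_univ (⟨s0, hs0⟩ : Fin a.rows)) ?_
      refine Finset.prod_eq_zero (Finset.mem_univ (⟨t0, ht0⟩ : Fin a.cols)) ?_
      rcases hmix with ⟨h1, h2⟩ | ⟨h1, h2⟩
      · have hg1 : glue r ι₁ ι₂ ⟨s0, hs0⟩ < rowsC X := by
          rw [glue_apply_lt ι₁ ι₂ (⟨s0, hs0⟩ : Fin a.rows) h1]
          exact ((mem_chainsB.1 hι₁).1 ⟨s0, h1⟩).2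
        have hg2 : colsC X ≤ glue c κ₁ κ₂ ⟨t0, ht0⟩ := by
          rw [glue_apply_ge κ₁ κ₂ (⟨t0, ht0⟩ : Fin a.cols) (by show ¬(t0 < c); omega)]
          exact ((mem_chainsB.1 hκ₂).1 _).1
        rw [hZmix1 _ _ hg1 hg2]
        exact evalMon_zero_left hne
      · have hg1 : rowsC X ≤ glue r ι₁ ι₂ ⟨s0, hs0⟩ := by
          rw [glue_apply_ge ι₁ ι₂ (⟨s0, hs0⟩ : Fin a.rows) (by show ¬(s0 < r); omega)]
          exact ((mem_chainsB.1 hι₂).1 _).1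
        have hg2 : glue c κ₁ κ₂ ⟨t0, ht0⟩ < colsC X := by
          rw [glue_apply_lt κ₁ κ₂ (⟨t0, ht0⟩ : Fin a.cols) h2]
          exact ((mem_chainsB.1 hκ₁).1 ⟨t0, h2⟩).2
        rw [hZmix2 _ _ hg1 hg2]
        exact evalMon_zero_left hne
  -- the right-hand side as a finite sum
  have hinj : ∀ x ∈ (Finset.range (a.rows + 1) ×ˢ Finset.range (a.cols + 1)).filter
      (fun rc => Splits rc.1 rc.2 a),
      ∀ y ∈ (Finset.range (a.rows + 1) ×ˢ Finset.range (a.cols + 1)).filter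
      (fun rc => Splits rc.1 rc.2 a),
      (blockL x.1 x.2 a, blockR x.1 x.2 a) = (blockL y.1 y.2 a, blockR y.1 y.2 a)
      → x = y := by
    intro x _ y _ hxy
    have h1 : x.1 = y.1 :=
      congrArg (fun p : RawMat d × RawMat d => p.1.rows) hxy
    have h2 : x.2 = y.2 :=
      congrArg (fun p : RawMat d × RawMat d => p.1.cols) hxy
    exact Prod.ext h1 h2
  have hset : {bc : RawMat d × RawMat d |
        bc.1.IsComp ∧ bc.2.IsComp ∧ bc.1.diag bc.2 = a}
      = ↑(((Finset.range (a.rows + 1) ×ˢ Finset.range (a.cols + 1)).filter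
          (fun rc => Splits rc.1 rc.2 a)).image
            (fun rc => (blockL rc.1 rc.2 a, blockR rc.1 rc.2 a))) := by
    ext ⟨b, c⟩
    rw [Finset.mem_coe, Finset.mem_image]
    constructor
    · rintro ⟨hb, hc, hdiag⟩
      have hrows : b.rows + c.rows = a.rows := congrArg RawMat.rows hdiag
      have hcols : b.cols + c.cols = a.cols := congrArg RawMat.cols hdiag
      refine ⟨(b.rows, b.cols), ?_, ?_⟩
      · rw [Finset.mem_filter, Finset.mem_product]
        refine ⟨⟨Finset.mem_range.2 (by omega), Finset.mem_range.2 (by omega)⟩, ?_⟩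
        show Splits b.rows b.cols a
        rw [← hdiag]
        exact splits_of_diag b c
      · show (blockL b.rows b.cols a, blockR b.rows b.cols a) = (b, c)
        rw [← hdiag, blockL_of_diag, blockR_of_diag]
    · rintro ⟨⟨r, c'⟩, hmem, heq⟩
      rw [Finset.mem_filter, Finset.mem_product, Finset.mem_range,
        Finset.mem_range] at hmem
      obtain ⟨⟨hr, hc⟩, hsp⟩ := hmem
      have hr' : r ≤ a.rows := by omega
      have hc' : c' ≤ a.cols := by omega
      cases heq
      exact ⟨blockL_isComp ha hr' hc' hsp, blockR_isComp ha hr' hc' hsp,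
        diag_blocks_eq hr' hc' hsp⟩
  -- assemble
  rw [SSc_eq_sum_chainsB ha hZbound]
  rw [sum_chainsB_split (show rowsC X ≤ rowsC X + rowsC Y from by omega)]
  beta_reduce
  simp only [sum_chainsB_split (show colsC X ≤ colsC X + colsC Y from by omega)]
  -- reorder: move the column cut outside
  conv_lhs =>
    enter [2, r, 2, ι₁]
    rw [Finset.sum_comm]
  conv_lhs =>
    enter [2, r]
    rw [Finset.sum_comm]
  refine Eq.trans (Finset.sum_congr rfl fun r hr =>
    Finset.sum_congr rfl (hcell r hr)) ?_
  rw [← Finset.sum_product', ← Finset.sum_filter]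
  rw [hset, finsum_mem_coe_finset, Finset.sum_image hinj]
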